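/- arXiv:2409.19373 — 2 statements merged into one kernel-verified Lean document; each statement's English description precedes it below -/
import Mathlib

section
/- Let n ≥ 2 and let K ⊂ ℝⁿ be a compact strictly convex body with C^∞ boundary ∂K. Suppose there exist m ∈ ℕ with m ≥ 1 and nonzero polynomials q ∈ ℝ[x₁,…,xₙ] and p ∈ ℝ[x₁,…,xₙ,t] such that q(ξ)·A_K(ξ,t)^m + p(ξ,t) = 0 for all ξ ∈ S^{n−1} and all t ∈ ℝ with A_K(ξ,t) > 0. Then for every ξ ∈ S^{n−1}, p(ξ, h_K(ξ)) = 0 and p(ξ, −h_K(−ξ)) = 0, where h_K is the support function of K. -/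
open MeasureTheory

/-- The section function: `(n-1)`-dimensional Hausdorff measure of the hyperplane
cross-section `K ∩ {x · ξ = t}`. -/
noncomputable def secFun {n : ℕ} (K : Set (EuclideanSpace ℝ (Fin n)))
    (ξ : EuclideanSpace ℝ (Fin n)) (t : ℝ) : ℝ :=
  (μH[((n : ℝ) - 1)] (K ∩ {x : EuclideanSpace ℝ (Fin n) | (inner ℝ x ξ : ℝ) = t})).toReal

/-- The support function of `K`. -/
noncomputable def suppFun {n : ℕ} (K : Set (EuclideanSpace ℝ (Fin n)))
    (ξ : EuclideanSpace ℝ (Fin n)) : ℝ :=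
  sSup ((fun x => (inner ℝ x ξ : ℝ)) '' K)

/-- `S` is a C^∞ embedded hypersurface: locally the regular zero set of a C^∞ function. -/
def IsSmoothHypersurface {n : ℕ} (S : Set (EuclideanSpace ℝ (Fin n))) : Prop :=
  ∀ a ∈ S, ∃ (U : Set (EuclideanSpace ℝ (Fin n))) (f : EuclideanSpace ℝ (Fin n) → ℝ),
    IsOpen U ∧ a ∈ U ∧ ContDiffOn ℝ (⊤ : ℕ∞) f U ∧
    S ∩ U = {x ∈ U | f x = 0} ∧
    ∀ x ∈ S ∩ U, fderiv ℝ f x ≠ 0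


open Metric Filter Set Module
open scoped ENNReal NNReal

section AuxSec
variable {n : ℕ}

theorem master (hn : 2 ≤ n) {ξ : EuclideanSpace ℝ (Fin n)} (hξ : ‖ξ‖ = 1) :
    ∃ C : ℝ≥0∞, C ≠ ⊤ ∧
      (∀ (t : ℝ) (S : Set (EuclideanSpace ℝ (Fin n))),
        (∀ x ∈ S, (inner ℝ x ξ : ℝ) = t) → ∀ z ∈ S, ∀ ε : ℝ, 0 ≤ ε →
        (∀ x ∈ S, dist x z ≤ ε) →
        μH[((n : ℝ) - 1)] S ≤ ENNReal.ofReal (ε ^ (n - 1)) * C) ∧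
      (∀ (t : ℝ) (w : EuclideanSpace ℝ (Fin n)) (r : ℝ), 0 < r → (inner ℝ w ξ : ℝ) = t →
        0 < μH[((n : ℝ) - 1)] ({x : EuclideanSpace ℝ (Fin n) | (inner ℝ x ξ : ℝ) = t} ∩ ball w r)) := by
  have hξ0 : ξ ≠ 0 := by
    intro h; rw [h, norm_zero] at hξ; norm_num at hξ
  set W := (ℝ ∙ ξ)ᗮ with hW
  have hfin : finrank ℝ W = n - 1 := by
    have h1 : finrank ℝ (ℝ ∙ ξ) = 1 := finrank_span_singleton hξ0
    have h2 := Submodule.finrank_add_finrank_orthogonal (K := (ℝ ∙ ξ))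
    have h3 : finrank ℝ (EuclideanSpace ℝ (Fin n)) = n := finrank_euclideanSpace_fin
    rw [← hW, h1, h3] at h2
    omega
  have hcast : ((n : ℝ) - 1) = ((finrank ℝ W : ℕ) : ℝ) := by
    rw [hfin]
    have : (1:ℕ) ≤ n := by omega
    push_cast [Nat.cast_sub this]
    ring
  have hHaar : (μH[((n : ℝ) - 1)] : Measure W).IsAddHaarMeasure := by
    rw [hcast]
    exact isAddHaarMeasure_hausdorffMeasure
  haveI := hHaar
  set μW : Measure W := μH[((n : ℝ) - 1)] with hμW
  have hd0 : (0:ℝ) ≤ (n : ℝ) - 1 := by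
    have : (2:ℝ) ≤ n := by exact_mod_cast hn
    linarith
  -- the affine isometry from W onto the hyperplane at level t
  have key : ∀ t : ℝ, ∃ g : W → EuclideanSpace ℝ (Fin n),
      Isometry g ∧ (∀ x : EuclideanSpace ℝ (Fin n), (inner ℝ x ξ : ℝ) = t → x ∈ Set.range g) ∧
      (∀ u : W, (inner ℝ (g u) ξ : ℝ) = t) ∧
      (∀ S : Set (EuclideanSpace ℝ (Fin n)), (∀ x ∈ S, (inner ℝ x ξ : ℝ) = t) →
        μH[((n : ℝ) - 1)] S = μW (g ⁻¹' S)) := by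
    intro t
    set g : W → EuclideanSpace ℝ (Fin n) := fun w => (w : EuclideanSpace ℝ (Fin n)) + t • ξ
      with hg
    have hgiso : Isometry g := by
      apply Isometry.of_dist_eq
      intro w1 w2
      rw [hg]
      rw [dist_eq_norm, Subtype.dist_eq, dist_eq_norm]
      congr 1
      exact add_sub_add_right_eq_sub _ _ _
    have hrange : ∀ x : EuclideanSpace ℝ (Fin n), (inner ℝ x ξ : ℝ) = t → x ∈ Set.range g := by
      intro x hx
      have hmem : x - t • ξ ∈ W := by
        rw [hW, Submodule.mem_orthogonal_singleton_iff_inner_right]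
        rw [inner_sub_right, real_inner_smul_right, real_inner_comm x ξ, hx,
          real_inner_self_eq_norm_sq, hξ]
        ring
      exact ⟨⟨x - t • ξ, hmem⟩, by simp [hg]⟩
    refine ⟨g, hgiso, hrange, ?_, ?_⟩
    · intro u
      have hu : (inner ℝ (u : EuclideanSpace ℝ (Fin n)) ξ : ℝ) = 0 :=
        Submodule.mem_orthogonal_singleton_iff_inner_left.mp u.2
      rw [hg]
      simp only []
      rw [inner_add_left, hu, real_inner_smul_left, real_inner_self_eq_norm_sq, hξ]
      ring
    · intro S hS
      have hSr : S = g '' (g ⁻¹' S) := by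
        rw [Set.image_preimage_eq_inter_range]
        exact (Set.inter_eq_left.mpr fun x hx => hrange x (hS x hx)).symm
      calc μH[((n : ℝ) - 1)] S = μH[((n : ℝ) - 1)] (g '' (g ⁻¹' S)) := by rw [← hSr]
        _ = μW (g ⁻¹' S) := hgiso.hausdorffMeasure_image (Or.inl hd0) _
  refine ⟨μW (ball 0 1), ?_, ?_, ?_⟩
  · exact (measure_ball_lt_top).ne
  · -- upper bound
    intro t S hS z hz ε hε hdist
    obtain ⟨g, hgiso, hrange, hlevel, htrans⟩ := key t
    obtain ⟨a, ha⟩ := hrange z (hS z hz)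
    have hsub : g ⁻¹' S ⊆ closedBall a ε := by
      intro u hu
      rw [mem_closedBall, ← hgiso.dist_eq, ha]
      exact hdist _ hu
    rw [htrans S hS]
    calc μW (g ⁻¹' S) ≤ μW (closedBall a ε) := measure_mono hsub
      _ = ENNReal.ofReal (ε ^ finrank ℝ W) * μW (ball 0 1) :=
        Measure.addHaar_closedBall μW a hε
      _ = ENNReal.ofReal (ε ^ (n - 1)) * μW (ball 0 1) := by rw [hfin]
  · -- positivity
    intro t w r hr hw
    obtain ⟨g, hgiso, hrange, hlevel, htrans⟩ := key t
    obtain ⟨a, ha⟩ := hrange w hw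
    have hset : ∀ x ∈ ({x : EuclideanSpace ℝ (Fin n) | (inner ℝ x ξ : ℝ) = t} ∩ ball w r),
        (inner ℝ x ξ : ℝ) = t := fun x hx => hx.1
    rw [htrans _ hset]
    have hsub : ball a r ⊆ g ⁻¹' ({x : EuclideanSpace ℝ (Fin n) | (inner ℝ x ξ : ℝ) = t} ∩ ball w r) := by
      intro u hu
      refine ⟨hlevel u, ?_⟩
      rw [mem_ball] at hu ⊢
      rw [← ha, hgiso.dist_eq]
      exact hu
    exact lt_of_lt_of_le (measure_ball_pos μW a hr) (measure_mono hsub)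

section Aux
variable {K : Set (EuclideanSpace ℝ (Fin n))} {ξ : EuclideanSpace ℝ (Fin n)}

theorem supp_upper (hKcpt : IsCompact K) {x : EuclideanSpace ℝ (Fin n)} (hx : x ∈ K) (ξ : EuclideanSpace ℝ (Fin n)) :
    (inner ℝ x ξ : ℝ) ≤ suppFun K ξ := by
  apply le_csSup
  · exact ((hKcpt.image (Continuous.inner continuous_id continuous_const)).bddAbove)
  · exact ⟨x, hx, rfl⟩

theorem supp_attained (hKcpt : IsCompact K) (hKne : K.Nonempty) (ξ : EuclideanSpace ℝ (Fin n)) :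
    ∃ x ∈ K, (inner ℝ x ξ : ℝ) = suppFun K ξ := by
  obtain ⟨x, hxK, hmax⟩ := hKcpt.exists_isMaxOn (f := fun y => (inner ℝ y ξ : ℝ)) hKne
    ((Continuous.inner continuous_id continuous_const).continuousOn)
  refine ⟨x, hxK, ?_⟩
  have : IsGreatest ((fun y => (inner ℝ y ξ : ℝ)) '' K) (inner ℝ x ξ : ℝ) :=
    ⟨⟨x, hxK, rfl⟩, by rintro v ⟨y, hy, rfl⟩; exact hmax hy⟩
  exact (this.csSup_eq).symm

theorem frontier_of_max (hKcpt : IsCompact K) (hξ : ‖ξ‖ = 1)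
    {x : EuclideanSpace ℝ (Fin n)} (hx : x ∈ K) (hb : (inner ℝ x ξ : ℝ) = suppFun K ξ) :
    x ∈ frontier K := by
  rw [hKcpt.isClosed.frontier_eq]
  refine ⟨hx, fun hint => ?_⟩
  obtain ⟨r, hr, hball⟩ := Metric.mem_nhds_iff.mp (mem_interior_iff_mem_nhds.mp hint)
  have hmem : x + (r / 2) • ξ ∈ K := by
    apply hball
    rw [mem_ball, dist_eq_norm]
    simp only [add_sub_cancel_left, norm_smul, hξ]
    rw [Real.norm_eq_abs, abs_of_pos (by linarith)]
    linarith
  have := supp_upper hKcpt hmem ξ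
  rw [inner_add_left, real_inner_smul_left, real_inner_self_eq_norm_sq, hξ, hb] at this
  nlinarith

theorem shrink (hKcpt : IsCompact K) (hKconv : Convex ℝ K)
    (hKstrict : ∀ x ∈ frontier K, ∀ y ∈ frontier K, x ≠ y → ¬ segment ℝ x y ⊆ frontier K)
    (hξ : ‖ξ‖ = 1) {ε : ℝ} (hε : 0 < ε) :
    ∃ δ : ℝ, 0 < δ ∧ ∀ x ∈ K, ∀ y ∈ K, suppFun K ξ - δ ≤ (inner ℝ x ξ : ℝ) →
      suppFun K ξ - δ ≤ (inner ℝ y ξ : ℝ) → dist x y ≤ ε := by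
  by_contra hcon
  push_neg at hcon
  set b := suppFun K ξ with hbdef
  set T : ℕ → Set (EuclideanSpace ℝ (Fin n) × EuclideanSpace ℝ (Fin n)) := fun k =>
    {z | z.1 ∈ K ∧ z.2 ∈ K ∧ b - 1 / (k + 1) ≤ (inner ℝ z.1 ξ : ℝ) ∧
      b - 1 / (k + 1) ≤ (inner ℝ z.2 ξ : ℝ) ∧ ε ≤ dist z.1 z.2} with hT
  have hcont1 : Continuous fun z : EuclideanSpace ℝ (Fin n) × EuclideanSpace ℝ (Fin n) =>
      (inner ℝ z.1 ξ : ℝ) := Continuous.inner continuous_fst continuous_const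
  have hcont2 : Continuous fun z : EuclideanSpace ℝ (Fin n) × EuclideanSpace ℝ (Fin n) =>
      (inner ℝ z.2 ξ : ℝ) := Continuous.inner continuous_snd continuous_const
  have hclosed : ∀ k, IsClosed (T k) := by
    intro k
    have hTk : T k = (Prod.fst ⁻¹' K) ∩ ((Prod.snd ⁻¹' K) ∩
        ({z : EuclideanSpace ℝ (Fin n) × EuclideanSpace ℝ (Fin n) |
            b - 1 / (k + 1) ≤ (inner ℝ z.1 ξ : ℝ)} ∩
          ({z : EuclideanSpace ℝ (Fin n) × EuclideanSpace ℝ (Fin n) |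
              b - 1 / (k + 1) ≤ (inner ℝ z.2 ξ : ℝ)} ∩
            {z : EuclideanSpace ℝ (Fin n) × EuclideanSpace ℝ (Fin n) |
              ε ≤ dist z.1 z.2}))) := rfl
    rw [hTk]
    exact (hKcpt.isClosed.preimage continuous_fst).inter
      ((hKcpt.isClosed.preimage continuous_snd).inter
        ((isClosed_le continuous_const hcont1).inter
          ((isClosed_le continuous_const hcont2).inter
            (isClosed_le continuous_const (continuous_fst.dist continuous_snd)))))
  have hne : ∀ k : ℕ, (T k).Nonempty := by
    intro k
    obtain ⟨x, hxK, y, hyK, hx, hy, hd⟩ := hcon (1 / (k + 1)) (by positivity)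
    exact ⟨(x, y), hxK, hyK, hx, hy, hd.le⟩
  have hmono : ∀ k : ℕ, T (k + 1) ⊆ T k := by
    intro k z hz
    have h1 : (1 : ℝ) / (k + 1 + 1) ≤ 1 / (k + 1) := by
      apply div_le_div_of_nonneg_left (by norm_num) (by positivity) (by push_cast; linarith)
    refine ⟨hz.1, hz.2.1, le_trans (by push_cast; linarith) hz.2.2.1,
      le_trans (by push_cast; linarith) hz.2.2.2.1, hz.2.2.2.2⟩
  have hT0 : IsCompact (T 0) :=
    (hKcpt.prod hKcpt).of_isClosed_subset (hclosed 0) (fun z hz => ⟨hz.1, hz.2.1⟩)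
  obtain ⟨⟨x, y⟩, hmem⟩ :=
    IsCompact.nonempty_iInter_of_sequence_nonempty_isCompact_isClosed T hmono hne hT0 hclosed
  simp only [Set.mem_iInter] at hmem
  have hxK : x ∈ K := (hmem 0).1
  have hyK : y ∈ K := (hmem 0).2.1
  have hxb : (inner ℝ x ξ : ℝ) = b := by
    refine le_antisymm (supp_upper hKcpt hxK ξ) ?_
    by_contra hlt
    push_neg at hlt
    obtain ⟨k, hk⟩ := exists_nat_one_div_lt (sub_pos.mpr hlt)
    have := (hmem k).2.2.1
    push_cast at this hk
    linarith
  have hyb : (inner ℝ y ξ : ℝ) = b := by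
    refine le_antisymm (supp_upper hKcpt hyK ξ) ?_
    by_contra hlt
    push_neg at hlt
    obtain ⟨k, hk⟩ := exists_nat_one_div_lt (sub_pos.mpr hlt)
    have := (hmem k).2.2.2.1
    push_cast at this hk
    linarith
  have hxy : x ≠ y := by
    intro h
    have := (hmem 0).2.2.2.2
    rw [h, dist_self] at this
    linarith
  refine hKstrict x (frontier_of_max hKcpt hξ hxK hxb) y (frontier_of_max hKcpt hξ hyK hyb)
    hxy ?_
  rintro z ⟨a, c, ha, hc, hac, rfl⟩
  have hzK : a • x + c • y ∈ K := hKconv hxK hyK ha hc hac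
  have hzb : (inner ℝ (a • x + c • y) ξ : ℝ) = b := by
    rw [inner_add_left, real_inner_smul_left, real_inner_smul_left, hxb, hyb]
    linear_combination b * hac
  exact frontier_of_max hKcpt hξ hzK hzb

theorem neg_supp_lt (hKcpt : IsCompact K) (hKint : (interior K).Nonempty)
    (hξ : ‖ξ‖ = 1) : -suppFun K (-ξ) < suppFun K ξ := by
  obtain ⟨c, hc⟩ := hKint
  obtain ⟨r, hr, hball⟩ := Metric.mem_nhds_iff.mp (mem_interior_iff_mem_nhds.mp hc)
  have hnorm : ‖(r / 2) • ξ‖ = r / 2 := by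
    rw [norm_smul, hξ, mul_one, Real.norm_eq_abs]
    exact abs_of_pos (by linarith)
  have hP : c + (r / 2) • ξ ∈ K := by
    apply hball
    rw [mem_ball, dist_eq_norm, add_sub_cancel_left, hnorm]
    linarith
  have hM : c - (r / 2) • ξ ∈ K := by
    apply hball
    rw [mem_ball, dist_eq_norm, sub_sub_cancel_left, norm_neg, hnorm]
    linarith
  have hu1 := supp_upper hKcpt hP ξ
  have hu2 := supp_upper hKcpt hM (-ξ)
  rw [inner_add_left, real_inner_smul_left, real_inner_self_eq_norm_sq, hξ] at hu1
  rw [inner_neg_right, inner_sub_left, real_inner_smul_left,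
    real_inner_self_eq_norm_sq, hξ] at hu2
  nlinarith

theorem exists_interior_gt (hKcpt : IsCompact K) (hKconv : Convex ℝ K)
    {c : EuclideanSpace ℝ (Fin n)} (hc : c ∈ interior K)
    {x : EuclideanSpace ℝ (Fin n)} (hxK : x ∈ K) {t : ℝ} (hx : t < (inner ℝ x ξ : ℝ)) :
    ∃ y ∈ interior K, t < (inner ℝ y ξ : ℝ) := by
  set d : ℝ := (inner ℝ c ξ : ℝ) with hd
  set e : ℝ := (inner ℝ x ξ : ℝ) with he
  by_cases htd : t < d
  · exact ⟨c, hc, htd⟩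
  push_neg at htd
  have hde : d < e := lt_of_le_of_lt htd hx
  set s : ℝ := (t - d + (e - t) / 2) / (e - d) with hs
  have hed : (0:ℝ) < e - d := by linarith
  have hs0 : 0 < s := by
    apply div_pos
    · linarith
    · exact hed
  have hs1 : s < 1 := by
    rw [hs, div_lt_one hed]
    linarith
  have hsmul : s * (e - d) = t - d + (e - t) / 2 := div_mul_cancel₀ _ (ne_of_gt hed)
  refine ⟨(1 - s) • c + s • x, ?_, ?_⟩
  · exact hKconv.combo_interior_closure_mem_interior hc (subset_closure hxK)
      (by linarith) (by linarith) (by ring)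
  · rw [inner_add_left, real_inner_smul_left, real_inner_smul_left, ← hd, ← he]
    nlinarith

theorem secFun_pos (hn : 2 ≤ n) (hKcpt : IsCompact K) (hKint : (interior K).Nonempty)
    (hKconv : Convex ℝ K) (hξ : ‖ξ‖ = 1) {t : ℝ}
    (ht1 : -suppFun K (-ξ) < t) (ht2 : t < suppFun K ξ) : 0 < secFun K ξ t := by
  obtain ⟨C, hC, hub, hpos⟩ := master hn hξ
  obtain ⟨c, hc⟩ := hKint
  have hKne : K.Nonempty := ⟨c, interior_subset hc⟩
  obtain ⟨xP, hxPK, hxP⟩ := supp_attained hKcpt hKne ξ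
  obtain ⟨xM, hxMK, hxM⟩ := supp_attained hKcpt hKne (-ξ)
  rw [inner_neg_right] at hxM
  have hξn : ‖(-ξ : EuclideanSpace ℝ (Fin n))‖ = 1 := by rw [norm_neg, hξ]
  -- an interior point strictly above level t, and one strictly below
  obtain ⟨yP, hyPi, hyP⟩ := exists_interior_gt hKcpt hKconv hc hxPK (by rw [hxP]; exact ht2)
  obtain ⟨yM', hyMi, hyM⟩ := exists_interior_gt (ξ := -ξ) (t := -t) hKcpt hKconv hc hxMK
    (by rw [inner_neg_right, hxM]; linarith)
  have hyM' : (inner ℝ yM' ξ : ℝ) < t := by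
    rw [inner_neg_right] at hyM
    linarith
  -- a point on the hyperplane in the interior
  set vP : ℝ := (inner ℝ yP ξ : ℝ) with hvP
  set vM : ℝ := (inner ℝ yM' ξ : ℝ) with hvM
  have hvv : (0:ℝ) < vP - vM := by linarith
  set s : ℝ := (t - vM) / (vP - vM) with hs
  have hs0 : 0 < s := div_pos (by linarith) hvv
  have hs1 : s < 1 := by rw [hs, div_lt_one hvv]; linarith
  have hsmul : s * (vP - vM) = t - vM := div_mul_cancel₀ _ (ne_of_gt hvv)
  set w : EuclideanSpace ℝ (Fin n) := (1 - s) • yM' + s • yP with hw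
  have hwi : w ∈ interior K :=
    hKconv.interior hyMi hyPi (by linarith) (by linarith) (by ring)
  have hwt : (inner ℝ w ξ : ℝ) = t := by
    rw [hw, inner_add_left, real_inner_smul_left, real_inner_smul_left, ← hvP, ← hvM]
    nlinarith
  obtain ⟨r, hr, hball⟩ := Metric.mem_nhds_iff.mp (mem_interior_iff_mem_nhds.mp hwi)
  rw [secFun]
  apply ENNReal.toReal_pos
  · refine ne_of_gt (lt_of_lt_of_le (hpos t w r hr hwt) (measure_mono ?_))
    intro x hx
    exact ⟨hball hx.2, hx.1⟩
  · obtain ⟨R, hR⟩ := Metric.isBounded_iff.mp hKcpt.isBounded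
    have hwK : w ∈ K := interior_subset hwi
    have hwS : w ∈ K ∩ {x : EuclideanSpace ℝ (Fin n) | (inner ℝ x ξ : ℝ) = t} := ⟨hwK, hwt⟩
    have hR0 : (0:ℝ) ≤ R := by
      have := hR hwK hwK
      simpa [dist_self] using this
    exact ne_top_of_le_ne_top (ENNReal.mul_ne_top ENNReal.ofReal_ne_top hC)
      (hub t _ (fun x hx => hx.2) w hwS R hR0 (fun x hx => hR hx.1 hwK))

theorem tendsto_secFun_zero (hn : 2 ≤ n) (hKcpt : IsCompact K) (hKconv : Convex ℝ K)
    (hKstrict : ∀ x ∈ frontier K, ∀ y ∈ frontier K, x ≠ y → ¬ segment ℝ x y ⊆ frontier K)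
    (hξ : ‖ξ‖ = 1) :
    Tendsto (secFun K ξ) (nhdsWithin (suppFun K ξ) (Iio (suppFun K ξ))) (nhds 0) := by
  rw [Metric.tendsto_nhds]
  intro ε hε
  obtain ⟨C, hC, hub, hpos⟩ := master hn hξ
  set cr := C.toReal with hcrdef
  have hcr : 0 ≤ cr := ENNReal.toReal_nonneg
  set ε' := min 1 (ε / (2 * (cr + 1))) with hε'def
  have hε'0 : 0 < ε' := lt_min one_pos (by positivity)
  have hε'1 : ε' ≤ 1 := min_le_left _ _
  have hbound : ε' ^ (n - 1) * cr < ε := by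
    have h1 : ε' ^ (n - 1) ≤ ε' := by
      calc ε' ^ (n - 1) ≤ ε' ^ 1 := pow_le_pow_of_le_one hε'0.le hε'1 (by omega)
        _ = ε' := pow_one _
    have h2 : ε' ≤ ε / (2 * (cr + 1)) := min_le_right _ _
    have h3 : ε / (2 * (cr + 1)) * cr < ε := by
      rw [div_mul_eq_mul_div, div_lt_iff₀ (by positivity)]
      nlinarith
    nlinarith [pow_nonneg hε'0.le (n - 1)]
  obtain ⟨δ, hδ, hδprop⟩ := shrink hKcpt hKconv hKstrict hξ hε'0
  have hIoo : Ioo (suppFun K ξ - δ) (suppFun K ξ) ∈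
      nhdsWithin (suppFun K ξ) (Iio (suppFun K ξ)) := by
    rw [mem_nhdsLT_iff_exists_Ioo_subset]
    exact ⟨suppFun K ξ - δ, by simp [hδ], subset_rfl⟩
  filter_upwards [hIoo] with t ht
  have h0 : (0:ℝ) ≤ secFun K ξ t := by simp only [secFun]; exact ENNReal.toReal_nonneg
  rw [Real.dist_eq, sub_zero, abs_of_nonneg h0]
  rcases (K ∩ {x : EuclideanSpace ℝ (Fin n) | (inner ℝ x ξ : ℝ) = t}).eq_empty_or_nonempty
    with hS | ⟨z, hz⟩
  · simp only [secFun, hS, measure_empty, ENNReal.toReal_zero]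
    exact hε
  · have hlev : ∀ x ∈ K ∩ {x : EuclideanSpace ℝ (Fin n) | (inner ℝ x ξ : ℝ) = t},
        (inner ℝ x ξ : ℝ) = t := fun x hx => hx.2
    have hdist : ∀ x ∈ K ∩ {x : EuclideanSpace ℝ (Fin n) | (inner ℝ x ξ : ℝ) = t},
        dist x z ≤ ε' := fun x hx =>
      hδprop x hx.1 z hz.1 (by rw [hx.2]; linarith [ht.1]) (by rw [hz.2]; linarith [ht.1])
    have hle := hub t _ hlev z hz ε' hε'0.le hdist
    calc secFun K ξ t ≤ (ENNReal.ofReal (ε' ^ (n - 1)) * C).toReal := by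
          simp only [secFun]
          exact ENNReal.toReal_mono (ENNReal.mul_ne_top ENNReal.ofReal_ne_top hC) hle
      _ = ε' ^ (n - 1) * cr := by
          rw [ENNReal.toReal_mul, ENNReal.toReal_ofReal (by positivity)]
      _ < ε := hbound

theorem secFun_neg_eq (K : Set (EuclideanSpace ℝ (Fin n))) (ξ : EuclideanSpace ℝ (Fin n))
    (t : ℝ) : secFun K ξ t = secFun K (-ξ) (-t) := by
  have hset : {x : EuclideanSpace ℝ (Fin n) | (inner ℝ x (-ξ) : ℝ) = -t} =
      {x : EuclideanSpace ℝ (Fin n) | (inner ℝ x ξ : ℝ) = t} := by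
    ext x
    rw [Set.mem_setOf_eq, Set.mem_setOf_eq, inner_neg_right, neg_inj]
  simp only [secFun, hset]

end Aux


theorem p_vanishes_at_support_values
    {n : ℕ} (hn : 2 ≤ n) (K : Set (EuclideanSpace ℝ (Fin n)))
    (hKcpt : IsCompact K) (hKint : (interior K).Nonempty)
    (hKconv : Convex ℝ K)
    (hKstrict : ∀ x ∈ frontier K, ∀ y ∈ frontier K, x ≠ y → ¬ segment ℝ x y ⊆ frontier K)
    (hKsmooth : IsSmoothHypersurface (frontier K))
    (m : ℕ) (hm : 1 ≤ m)
    (q : MvPolynomial (Fin n) ℝ) (hq : q ≠ 0)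
    (p : Polynomial (MvPolynomial (Fin n) ℝ)) (hp : p ≠ 0)
    (heq : ∀ ξ : EuclideanSpace ℝ (Fin n), ‖ξ‖ = 1 → ∀ t : ℝ, 0 < secFun K ξ t →
      MvPolynomial.eval (fun i => ξ i) q * secFun K ξ t ^ m +
        Polynomial.eval t (Polynomial.map (MvPolynomial.eval fun i => ξ i) p) = 0) :
    ∀ ξ : EuclideanSpace ℝ (Fin n), ‖ξ‖ = 1 →
      Polynomial.eval (suppFun K ξ) (Polynomial.map (MvPolynomial.eval fun i => ξ i) p) = 0 ∧
      Polynomial.eval (-suppFun K (-ξ)) (Polynomial.map (MvPolynomial.eval fun i => ξ i) p) = 0 := by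
  intro ξ hξ
  have hξn : ‖(-ξ : EuclideanSpace ℝ (Fin n))‖ = 1 := by rw [norm_neg, hξ]
  set b := suppFun K ξ with hbdef
  set a := -suppFun K (-ξ) with hadef
  have hab : a < b := neg_supp_lt hKcpt hKint hξ
  set P := Polynomial.map (MvPolynomial.eval fun i => ξ i) p with hPdef
  set qv := MvPolynomial.eval (fun i => ξ i) q with hqvdef
  have hkey : ∀ t ∈ Ioo a b, qv * secFun K ξ t ^ m + Polynomial.eval t P = 0 := fun t ht =>
    heq ξ hξ t (secFun_pos hn hKcpt hKint hKconv hξ ht.1 ht.2)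
  have hIoob : Ioo a b ∈ nhdsWithin b (Iio b) := by
    rw [mem_nhdsLT_iff_exists_Ioo_subset]
    exact ⟨a, hab, subset_rfl⟩
  have hIooa : Ioo a b ∈ nhdsWithin a (Ioi a) := by
    rw [mem_nhdsGT_iff_exists_Ioo_subset]
    exact ⟨b, hab, subset_rfl⟩
  have htb : Tendsto (secFun K ξ) (nhdsWithin b (Iio b)) (nhds 0) :=
    tendsto_secFun_zero hn hKcpt hKconv hKstrict hξ
  have hta : Tendsto (secFun K ξ) (nhdsWithin a (Ioi a)) (nhds 0) := by
    have h1 : Tendsto (secFun K (-ξ))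
        (nhdsWithin (suppFun K (-ξ)) (Iio (suppFun K (-ξ)))) (nhds 0) :=
      tendsto_secFun_zero hn hKcpt hKconv hKstrict hξn
    have hsa : suppFun K (-ξ) = -a := by rw [hadef, neg_neg]
    have h2 : Tendsto (fun t : ℝ => -t) (nhdsWithin a (Ioi a))
        (nhdsWithin (suppFun K (-ξ)) (Iio (suppFun K (-ξ)))) := by
      rw [tendsto_nhdsWithin_iff]
      constructor
      · rw [hsa]
        exact (continuous_neg.tendsto a).mono_left nhdsWithin_le_nhds
      · filter_upwards [self_mem_nhdsWithin] with t ht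
        rw [mem_Ioi] at ht
        rw [mem_Iio, hsa]
        linarith
    refine (h1.comp h2).congr fun t => ?_
    exact (secFun_neg_eq K ξ t).symm
  have hend : ∀ (l : Filter ℝ) (v : ℝ), l.NeBot → l ≤ nhds v → Ioo a b ∈ l →
      Tendsto (secFun K ξ) l (nhds 0) → Polynomial.eval v P = 0 := by
    intro l v hbot hlv hIoo htend
    haveI := hbot
    have h1 : Tendsto (fun t => qv * secFun K ξ t ^ m + Polynomial.eval t P) l
        (nhds (qv * 0 ^ m + Polynomial.eval v P)) := by
      apply Tendsto.add
      · exact (htend.pow m).const_mul qv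
      · exact (P.continuous.tendsto v).mono_left hlv
    have h2 : Tendsto (fun t => qv * secFun K ξ t ^ m + Polynomial.eval t P) l (nhds 0) := by
      apply Tendsto.congr' _ tendsto_const_nhds
      filter_upwards [hIoo] with t ht
      exact (hkey t ht).symm
    have h3 := tendsto_nhds_unique h1 h2
    rw [zero_pow (by omega), mul_zero, zero_add] at h3
    exact h3
  constructor
  · exact hend _ b (nhdsLT_neBot b) nhdsWithin_le_nhds hIoob htb
  · exact hend _ a (nhdsGT_neBot a) nhdsWithin_le_nhds hIooa hta

end AuxSec
end

section
/- Let n ≥ 2 and let Q ∈ ℂ[z₁,…,zₙ] be a nonzero polynomial with zero set Γ = {z ∈ ℂⁿ : Q(z) = 0}. Say that the complex hyperplane X(ξ,t) = {z ∈ ℂⁿ : ξ₁z₁ + ⋯ + ξₙzₙ = t} is tangent to Γ at a smooth point if there exists z ∈ ℂⁿ with Q(z) = 0, ξ·z = t, ∇Q(z) ≠ 0, and ∇Q(z) ∈ ℂ·ξ (the gradient ∇Q is taken with formal complex partial derivatives, and ξ ∈ ℝⁿ ⊂ ℂⁿ). Then there exists a real polynomial β on ℝⁿ whose restriction to S^{n−1}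 is not identically zero, such that for every ξ ∈ S^{n−1} with β(ξ) ≠ 0 the set {t ∈ ℂ : X(ξ,t) is tangent to Γ at a smooth point} is finite. -/
set_option maxHeartbeats 1000000
open MvPolynomial

/-- Evaluation of a homogeneous polynomial at a scaled point. -/
lemma homog_eval_smul {σ R : Type*} [Fintype σ] [CommSemiring R] {P : MvPolynomial σ R} {D : ℕ}
    (h : P.IsHomogeneous D) (c : R) (x : σ → R) :
    eval (fun i => c * x i) P = c ^ D * eval x P := by
  rw [eval_eq, eval_eq, Finset.mul_sum]
  refine Finset.sum_congr rfl fun d hd => ?_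
  have hdeg : d.degree = D := by
    have := h (mem_support_iff.mp hd)
    rw [Finsupp.degree_eq_weight_one]; exact this
  have : ∏ i ∈ d.support, (c * x i) ^ d i
      = c ^ d.degree * ∏ i ∈ d.support, x i ^ d i := by
    rw [Finsupp.degree_apply, ← Finset.prod_pow_eq_pow_sum]
    rw [← Finset.prod_mul_distrib]
    exact Finset.prod_congr rfl fun i _ => mul_pow _ _ _
  rw [this, hdeg]; ring

lemma degree_eq_sum_univ {σ : Type*} [Fintype σ] (f : σ →₀ ℕ) : f.degree = ∑ i, f i :=
  Finset.sum_subset (Finset.subset_univ _) fun i _ hi => Finsupp.notMem_support_iff.mp hi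

/-- Bounded finsupps are equivalent to functions into `Fin (N+1)`. -/
noncomputable def boundedEquiv (n N : ℕ) : {f : Fin n →₀ ℕ | ∀ i, f i ≤ N} ≃ (Fin n → Fin (N + 1)) where
  toFun f i := ⟨f.1 i, Nat.lt_succ_of_le (f.2 i)⟩
  invFun g := ⟨Finsupp.equivFunOnFinite.symm fun i => (g i : ℕ), fun i => by
    simpa using Nat.le_of_lt_succ (g i).2⟩
  left_inv f := by ext i; simp
  right_inv g := by ext i; simp

lemma finrank_restrictDegree (n N : ℕ) :
    Module.finrank ℂ (restrictDegree (Fin n) ℂ N) = (N + 1) ^ n := by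
  classical
  have : Fintype {f : Fin n →₀ ℕ | ∀ i, f i ≤ N} := Fintype.ofEquiv _ (boundedEquiv n N).symm
  rw [show restrictDegree (Fin n) ℂ N = restrictSupport ℂ {f | ∀ i, f i ≤ N} from rfl,
    Module.finrank_eq_card_basis (basisRestrictSupport ℂ _),
    Fintype.card_congr (boundedEquiv n N)]
  simp [Fintype.card_fun]

lemma pow_sub_pow_bound (a c : ℕ) (h : c ≤ a) : ∀ m : ℕ, a ^ (m+1) ≤ c ^ (m+1) + (m+1) * (a - c) * a ^ m := by
  intro m
  induction m with
  | zero => simpa using le_of_eq (Nat.add_sub_cancel' h).symm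
  | succ m ih =>
    have h1 : a ^ (m + 2) = a * a ^ (m+1) := by ring
    have h2 : a * a ^ (m+1) ≤ a * (c ^ (m+1) + (m+1) * (a - c) * a ^ m) :=
      Nat.mul_le_mul_left a ih
    have h3 : a * c ^ (m+1) = c * c ^ (m+1) + (a - c) * c ^ (m+1) := by
      rw [← Nat.add_mul, Nat.add_sub_cancel' h]
    have h4 : (a - c) * c ^ (m+1) ≤ (a - c) * a ^ (m+1) :=
      Nat.mul_le_mul_left _ (Nat.pow_le_pow_left h _)
    have h5 : a * ((m+1) * (a - c) * a ^ m) = (m+1) * (a - c) * a ^ (m+1) := by ring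
    calc a ^ (m+2) = a * a ^ (m+1) := h1
      _ ≤ a * c ^ (m+1) + a * ((m+1) * (a - c) * a ^ m) := by
          rw [← Nat.mul_add]; exact h2
      _ = c ^ (m+2) + ((a - c) * c ^ (m+1) + (m+1) * (a - c) * a ^ (m+1)) := by
          rw [h3, h5]; ring
      _ ≤ c ^ (m+2) + ((a - c) * a ^ (m+1) + (m+1) * (a - c) * a ^ (m+1)) := by
          exact Nat.add_le_add_left (Nat.add_le_add_right h4 _) _
      _ = c ^ (m+2) + (m+2) * (a - c) * a ^ (m+1) := by ring

lemma core (n : ℕ) (hn : 1 ≤ n) (Q : MvPolynomial (Fin n) ℂ) (hQ : Q ≠ 0)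
    (F : Fin (n + 1) → MvPolynomial (Fin n) ℂ) :
    ∃ (D : ℕ) (P : MvPolynomial (Fin (n + 1)) ℂ), P ≠ 0 ∧ P.IsHomogeneous D ∧
      (aeval F P) ∈ Ideal.span {Q} := by
  classical
  obtain ⟨n', rfl⟩ : ∃ n', n = n' + 1 := ⟨n - 1, by omega⟩
  obtain ⟨M, hM1, heM, hMF⟩ :
      ∃ M, 1 ≤ M ∧ Q.totalDegree < M ∧ ∀ j, (F j).totalDegree ≤ M :=
    ⟨Q.totalDegree + 1 + Finset.univ.sup (fun j => (F j).totalDegree), by omega, by omega,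
      fun j => le_trans (Finset.le_sup (f := fun j => (F j).totalDegree) (Finset.mem_univ j))
        (Nat.le_add_left _ _)⟩
  obtain ⟨K, hKpos, hKgt⟩ :
      ∃ K, 1 ≤ K ∧ (n' + 1) * Q.totalDegree * (2 * (n' + 1) * M) ^ n' < K :=
    ⟨(n' + 1) * Q.totalDegree * (2 * (n' + 1) * M) ^ n' + 1, by omega, by omega⟩
  obtain ⟨d, hdK⟩ : ∃ d, d = (n' + 1) * K := ⟨_, rfl⟩
  have hd1 : 1 ≤ d := by
    rw [hdK]; exact Nat.one_le_iff_ne_zero.mpr (by positivity)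
  obtain ⟨N, hNdM⟩ : ∃ N, N = d * M := ⟨_, rfl⟩
  have heN : Q.totalDegree ≤ N := by nlinarith
  -- index type : monomials of degree exactly d in n+1 variables
  let ι := {m : Fin (n' + 2) →₀ ℕ // m.degree = d}
  have hfin : Finite ι := by
    have h1 : Finite {f : Fin (n' + 2) →₀ ℕ | ∀ i, f i ≤ d} :=
      ((Set.Finite.pi' fun _ ↦ Set.finite_le_nat _).preimage
        DFunLike.coe_injective.injOn).to_subtype
    refine Finite.Set.subset {f : Fin (n' + 2) →₀ ℕ | ∀ i, f i ≤ d} ?_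
    intro m hm i
    exact le_trans (Finsupp.le_degree i m) (le_of_eq hm)
  have : Fintype ι := Fintype.ofFinite ι
  -- lower bound on the cardinality
  have hcard_lb : (K + 1) ^ (n' + 1) ≤ Fintype.card ι := by
    have hinj : Function.Injective (fun g : Fin (n' + 1) → Fin (K + 1) =>
        (⟨Finsupp.equivFunOnFinite.symm (Fin.cons (d - ∑ i, (g i : ℕ)) fun i => (g i : ℕ)), by
          have hle : ∑ i, (g i : ℕ) ≤ d := by
            calc ∑ i, (g i : ℕ) ≤ ∑ _i : Fin (n' + 1), K :=
              Finset.sum_le_sum fun i _ => Nat.le_of_lt_succ (g i).2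
            _ = (n' + 1) * K := by
                rw [Finset.sum_const, Finset.card_univ, Fintype.card_fin, smul_eq_mul]
            _ = d := hdK.symm
          rw [degree_eq_sum_univ]
          simp only [Finsupp.coe_equivFunOnFinite_symm]
          rw [Fin.sum_univ_succ]
          simp only [Fin.cons_zero, Fin.cons_succ]
          omega⟩ : ι)) := by
      intro g g' hgg'
      have := congrArg (fun m : ι => fun i : Fin (n' + 1) => (m.1 (Fin.succ i))) hgg'
      simp only [Finsupp.coe_equivFunOnFinite_symm, Fin.cons_succ] at this
      funext i
      exact Fin.ext (congrFun this i)
    calc (K + 1) ^ (n' + 1) = Fintype.card (Fin (n' + 1) → Fin (K + 1)) := by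
          simp [Fintype.card_fun]
      _ ≤ Fintype.card ι := Fintype.card_le_of_injective _ hinj
  -- the family of products
  let v : ι → MvPolynomial (Fin (n' + 1)) ℂ := fun m => ∏ j, F j ^ (m.1 j)
  have hv : ∀ m : ι, v m ∈ restrictDegree (Fin (n' + 1)) ℂ N := by
    intro m
    apply restrictTotalDegree_le_restrictDegree
    rw [mem_restrictTotalDegree]
    calc (∏ j, F j ^ (m.1 j)).totalDegree ≤ ∑ j, (F j ^ (m.1 j)).totalDegree :=
        totalDegree_finset_prod _ _
      _ ≤ ∑ j, m.1 j * M := Finset.sum_le_sum fun j _ =>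
          le_trans (totalDegree_pow _ _) (Nat.mul_le_mul_left _ (hMF j))
      _ = (∑ j, m.1 j) * M := by rw [Finset.sum_mul]
      _ = d * M := by rw [← degree_eq_sum_univ, m.2]
      _ = N := hNdM.symm
  -- quotient by the ideal generated by Q
  set U : Submodule ℂ (MvPolynomial (Fin (n' + 1)) ℂ) :=
    Submodule.restrictScalars ℂ (Ideal.span {Q}) with hU
  set φ : (restrictDegree (Fin (n' + 1)) ℂ N) →ₗ[ℂ] (MvPolynomial (Fin (n' + 1)) ℂ ⧸ U) :=
    U.mkQ.comp (Submodule.subtype _) with hφ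
  have hdep : ¬ LinearIndependent ℂ (fun m : ι => U.mkQ (v m)) := by
    intro hind
    have hw : ∀ m : ι, U.mkQ (v m) ∈ LinearMap.range φ := fun m => ⟨⟨v m, hv m⟩, rfl⟩
    let w' : ι → LinearMap.range φ := fun m => ⟨U.mkQ (v m), hw m⟩
    have hind' : LinearIndependent ℂ w' := by
      have hcomp : (fun m : ι => U.mkQ (v m)) = (LinearMap.range φ).subtype ∘ w' := rfl
      rw [hcomp] at hind
      exact LinearIndependent.of_comp _ hind
    have hcard := hind'.fintype_card_le_finrank
    -- kernel lower bound
    have hker : (N - Q.totalDegree + 1) ^ (n' + 1)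
        ≤ Module.finrank ℂ (LinearMap.ker φ) := by
      have hQmul : ∀ p : MvPolynomial (Fin (n' + 1)) ℂ,
          p ∈ restrictDegree (Fin (n' + 1)) ℂ (N - Q.totalDegree) →
          Q * p ∈ restrictDegree (Fin (n' + 1)) ℂ N := by
        intro p hp
        rw [mem_restrictDegree_iff_sup] at hp ⊢
        intro i
        calc (Q * p).degrees.count i = degreeOf i (Q * p) := (degreeOf_def i _).symm
          _ ≤ degreeOf i Q + degreeOf i p := degreeOf_mul_le _ _ _
          _ ≤ Q.totalDegree + (N - Q.totalDegree) := Nat.add_le_add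
              (degreeOf_le_totalDegree Q i)
              (le_trans (le_of_eq (degreeOf_def i p)) (hp i))
          _ = N := by omega
      let χ : (restrictDegree (Fin (n' + 1)) ℂ (N - Q.totalDegree)) →ₗ[ℂ] (LinearMap.ker φ) :=
        { toFun := fun p => ⟨⟨Q * p.1, hQmul p.1 p.2⟩, by
            simp only [LinearMap.mem_ker, hφ, LinearMap.comp_apply, Submodule.subtype_apply]
            rw [Submodule.mkQ_apply, Submodule.Quotient.mk_eq_zero]
            exact Ideal.mem_span_singleton.mpr ⟨p.1, rfl⟩⟩
          map_add' := fun p q => by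
            ext; simp [mul_add]
          map_smul' := fun c p => by
            ext; simp [mul_smul_comm] }
      have hχinj : Function.Injective χ := by
        intro p q hpq
        have : Q * p.1 = Q * q.1 := by
          have := congrArg (fun x : LinearMap.ker φ =>
            (x.1 : MvPolynomial (Fin (n' + 1)) ℂ)) hpq
          simpa [χ] using this
        exact Subtype.ext (mul_left_cancel₀ hQ this)
      calc (N - Q.totalDegree + 1) ^ (n' + 1)
          = Module.finrank ℂ (restrictDegree (Fin (n' + 1)) ℂ (N - Q.totalDegree)) :=
          (finrank_restrictDegree (n' + 1) (N - Q.totalDegree)).symm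
        _ ≤ Module.finrank ℂ (LinearMap.ker φ) :=
          LinearMap.finrank_le_finrank_of_injective hχinj
    have hRN := LinearMap.finrank_range_add_finrank_ker φ
    rw [finrank_restrictDegree (n' + 1) N] at hRN
    -- numeric contradiction
    have hbound := pow_sub_pow_bound (N + 1) (N - Q.totalDegree + 1) (by omega) n'
    have hNe : (N + 1) - (N - Q.totalDegree + 1) = Q.totalDegree := by omega
    rw [hNe] at hbound
    have hA : (K + 1) ^ (n' + 1) ≤ Module.finrank ℂ (LinearMap.range φ) :=
      le_trans hcard_lb hcard
    have hN1 : N + 1 ≤ 2 * (n' + 1) * M * K := by nlinarith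
    have hfinal : (n' + 1) * Q.totalDegree * (N + 1) ^ n' < (K + 1) ^ (n' + 1) := by
      calc (n' + 1) * Q.totalDegree * (N + 1) ^ n'
          ≤ (n' + 1) * Q.totalDegree * (2 * (n' + 1) * M * K) ^ n' :=
          Nat.mul_le_mul_left _ (Nat.pow_le_pow_left hN1 n')
        _ = ((n' + 1) * Q.totalDegree * (2 * (n' + 1) * M) ^ n') * K ^ n' := by
            rw [mul_pow]; ring
        _ < (K + 1) * K ^ n' := by
            apply Nat.mul_lt_mul_of_lt_of_le (by omega) (le_refl _) (by positivity)
        _ ≤ (K + 1) ^ (n' + 1) := by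
            rw [pow_succ, mul_comm]
            exact Nat.mul_le_mul_right _ (Nat.pow_le_pow_left (Nat.le_succ K) n')
    linarith
  -- extract the dependence
  rw [Fintype.not_linearIndependent_iff] at hdep
  obtain ⟨g, hg0, m₀, hm₀⟩ := hdep
  refine ⟨d, ∑ m : ι, monomial m.1 (g m), ?_, ?_, ?_⟩
  · intro hP0
    apply hm₀
    have : coeff m₀.1 (∑ m : ι, monomial m.1 (g m)) = g m₀ := by
      rw [coeff_sum]
      rw [Finset.sum_eq_single m₀]
      · simp [coeff_monomial]
      · intro m _ hne
        rw [coeff_monomial, if_neg (fun h => hne (Subtype.ext h))]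
      · intro h; exact absurd (Finset.mem_univ m₀) h
    rw [hP0] at this
    simpa using this.symm
  · exact IsHomogeneous.sum _ _ _ fun m _ => isHomogeneous_monomial _ m.2
  · have haeval : aeval F (∑ m : ι, monomial m.1 (g m)) = ∑ m : ι, g m • v m := by
      rw [map_sum]
      refine Finset.sum_congr rfl fun m _ => ?_
      rw [aeval_monomial, Algebra.smul_def]
      congr 1
      rw [Finsupp.prod_fintype]
      intro j; exact pow_zero _
    rw [haeval]
    have h0 : U.mkQ (∑ m : ι, g m • v m) = 0 := by
      rw [map_sum]
      simpa using hg0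
    rw [Submodule.mkQ_apply, Submodule.Quotient.mk_eq_zero] at h0
    exact h0

lemma eval_aeval' {n m : ℕ} (z : Fin n → ℂ) (F : Fin m → MvPolynomial (Fin n) ℂ)
    (P : MvPolynomial (Fin m) ℂ) :
    eval z (aeval F P) = eval (fun j => eval z (F j)) P := by
  rw [aeval_def, eval₂_comp_left (eval z) (algebraMap ℂ _) F P]
  have h1 : (eval z).comp (algebraMap ℂ (MvPolynomial (Fin n) ℂ)) = RingHom.id ℂ := by
    ext r; simp
  rw [h1, eval₂_id]
  rfl

lemma eval_of_totalDegree_zero {σ : Type*} {R : Type*} [CommSemiring R]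
    {p : MvPolynomial σ R} (h : p.totalDegree = 0) (y : σ → R) :
    eval y p = constantCoeff p := by
  classical
  have hmem := (totalDegree_eq_zero_iff σ p).mp h
  have hsub : p.support ⊆ {0} := fun m hm =>
    Finset.mem_singleton.mpr (Finsupp.ext fun i => hmem m hm i)
  rw [eval_eq, constantCoeff_eq]
  rw [Finset.sum_subset hsub (fun m _ hnot => by
    rw [notMem_support_iff.mp hnot, zero_mul])]
  simp

/-- real/imaginary coefficient part of a complex polynomial -/
noncomputable def mapCf {n : ℕ} (f : ℂ → ℝ) (p : MvPolynomial (Fin n) ℂ) :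
    MvPolynomial (Fin n) ℝ :=
  ∑ m ∈ p.support, monomial m (f (coeff m p))

lemma coeff_mapCf {n : ℕ} {f : ℂ → ℝ} (hf : f 0 = 0) (p : MvPolynomial (Fin n) ℂ)
    (m : Fin n →₀ ℕ) : coeff m (mapCf f p) = f (coeff m p) := by
  classical
  rw [mapCf, coeff_sum]
  simp only [coeff_monomial]
  rw [Finset.sum_ite_eq' p.support m (fun m' => f (coeff m' p))]
  by_cases hm : m ∈ p.support
  · rw [if_pos hm]
  · rw [if_neg hm, notMem_support_iff.mp hm, hf]

lemma eval_mapCf_decomp {n : ℕ} (p : MvPolynomial (Fin n) ℂ) (x : Fin n → ℝ) :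
    eval (fun i => (x i : ℂ)) p
      = (eval x (mapCf Complex.re p) : ℂ) + (eval x (mapCf Complex.im p) : ℂ) * Complex.I := by
  classical
  have hPm : ∀ m : Fin n →₀ ℕ,
      ((m.prod fun i k => x i ^ k : ℝ) : ℂ) = m.prod fun i k => ((x i : ℂ)) ^ k := by
    intro m
    rw [Finsupp.prod, Finsupp.prod, Complex.ofReal_prod]
    exact Finset.prod_congr rfl fun i _ => by push_cast; ring
  rw [mapCf, mapCf, map_sum, map_sum]
  simp only [eval_monomial]
  push_cast
  rw [Finset.sum_mul, ← Finset.sum_add_distrib]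
  conv_lhs => rw [p.as_sum]
  rw [map_sum]
  simp only [eval_monomial]
  refine Finset.sum_congr rfl fun m _ => ?_
  rw [← hPm m]
  have hc : coeff m p = (((coeff m p).re : ℂ)) + ((coeff m p).im : ℂ) * Complex.I :=
    (Complex.re_add_im _).symm
  conv_lhs => rw [hc]
  ring




/-- The complex hyperplane `{z : ξ·z = t}` is tangent to the zero set of `Q` at a smooth
point: there is `z` with `Q(z) = 0`, `ξ·z = t`, `∇Q(z) ≠ 0` and `∇Q(z) ∈ ℂ·ξ`. -/
def IsTangentHyperplane {n : ℕ} (Q : MvPolynomial (Fin n) ℂ)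
    (ξ : EuclideanSpace ℝ (Fin n)) (t : ℂ) : Prop :=
  ∃ z : Fin n → ℂ, MvPolynomial.eval z Q = 0 ∧ (∑ i, (ξ i : ℂ) * z i) = t ∧
    (fun i => MvPolynomial.eval z (MvPolynomial.pderiv i Q)) ≠ 0 ∧
    ∃ c : ℂ, ∀ i, MvPolynomial.eval z (MvPolynomial.pderiv i Q) = c * (ξ i : ℂ)

theorem finitely_many_tangent_hyperplanes_generic_direction
    {n : ℕ} (hn : 2 ≤ n) (Q : MvPolynomial (Fin n) ℂ) (hQ : Q ≠ 0) :
    ∃ β : MvPolynomial (Fin n) ℝ,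
      (∃ ξ₀ : EuclideanSpace ℝ (Fin n), ‖ξ₀‖ = 1 ∧
        MvPolynomial.eval (fun i => ξ₀ i) β ≠ 0) ∧
      ∀ ξ : EuclideanSpace ℝ (Fin n), ‖ξ‖ = 1 →
        MvPolynomial.eval (fun i => ξ i) β ≠ 0 →
        {t : ℂ | IsTangentHyperplane Q ξ t}.Finite := by
  classical
  obtain ⟨n', rfl⟩ : ∃ n', n = n' + 1 := ⟨n - 1, by omega⟩
  set G : MvPolynomial (Fin (n' + 1)) ℂ := ∑ i, X i * pderiv i Q with hG
  set F : Fin (n' + 2) → MvPolynomial (Fin (n' + 1)) ℂ :=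
    Fin.cons G (fun i => pderiv i Q) with hF
  obtain ⟨d, P, hPne, hPhom, hPmem⟩ := core (n' + 1) (by omega) Q hQ F
  obtain ⟨h, hh⟩ := Ideal.mem_span_singleton'.mp hPmem
  -- the vanishing of P on tangency data
  have hvanish : ∀ (ξ : EuclideanSpace ℝ (Fin (n' + 1))) (t : ℂ),
      IsTangentHyperplane Q ξ t →
      eval (Fin.cons t (fun i => (ξ i : ℂ))) P = 0 := by
    rintro ξ t ⟨z, hQz, hsum, hgrad, c, hc⟩
    have hc0 : c ≠ 0 := by
      intro h0
      apply hgrad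
      funext i
      rw [hc i, h0, zero_mul]
      rfl
    have heval : eval z (aeval F P) = 0 := by
      rw [← hh, map_mul, hQz, mul_zero]
    rw [eval_aeval' z F P] at heval
    have hFval : (fun j => eval z (F j))
        = fun j => c * ((Fin.cons t (fun i => (ξ i : ℂ)) : Fin (n' + 2) → ℂ) j) := by
      funext j
      refine Fin.cases ?_ (fun i => ?_) j
      · show eval z G = c * ((Fin.cons t (fun i => (ξ i : ℂ)) : Fin (n' + 2) → ℂ) 0)
        rw [Fin.cons_zero, hG, map_sum, ← hsum, Finset.mul_sum]
        refine Finset.sum_congr rfl fun i _ => ?_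
        rw [map_mul, eval_X, hc i]
        ring
      · show eval z (pderiv i Q) = c * ((Fin.cons t (fun i => (ξ i : ℂ)) : Fin (n' + 2) → ℂ) i.succ)
        rw [Fin.cons_succ, hc i]
    rw [hFval, homog_eval_smul hPhom c (Fin.cons t fun i => (ξ i : ℂ))] at heval
    exact (mul_eq_zero.mp heval).resolve_left (pow_ne_zero _ hc0)
  -- the leading coefficient in t
  set Φ : Polynomial (MvPolynomial (Fin (n' + 1)) ℂ) := finSuccEquiv ℂ (n' + 1) P with hΦdef
  have hΦ : Φ ≠ 0 := by
    intro h0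
    apply hPne
    rw [hΦdef] at h0
    apply (finSuccEquiv ℂ (n' + 1)).injective
    rw [h0, map_zero]
  set Kd := Φ.natDegree with hKddef
  set pK : MvPolynomial (Fin (n' + 1)) ℂ := Φ.leadingCoeff with hpKdef
  have hpK : pK ≠ 0 := Polynomial.leadingCoeff_ne_zero.mpr hΦ
  have hKd : Kd ≤ d := by
    obtain ⟨m, hm⟩ := ne_zero_iff.mp hpK
    have hco : coeff (m.cons Kd) P ≠ 0 := by
      rwa [← finSuccEquiv_coeff_coeff m P Kd]
    have := hPhom hco
    rw [show (Finsupp.weight 1 : (Fin (n' + 1 + 1) →₀ ℕ) →+ ℕ) = Finsupp.weight (fun _ => 1) from rfl,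
      ← Finsupp.degree_eq_weight_one] at this
    rw [degree_eq_sum_univ, Fin.sum_univ_succ, Finsupp.cons_zero] at this
    omega
  have hpKhom : pK.IsHomogeneous (d - Kd) :=
    hPhom.finSuccEquiv_coeff_isHomogeneous Kd (d - Kd) (by omega)
  -- real decomposition
  set a := mapCf Complex.re pK with ha
  set b := mapCf Complex.im pK with hb
  set β := a * a + b * b with hβ
  have hahom : a.IsHomogeneous (d - Kd) := by
    intro m hm
    apply hpKhom
    intro h0
    rw [ha, coeff_mapCf Complex.zero_re, h0] at hm
    exact hm Complex.zero_re
  have hbhom : b.IsHomogeneous (d - Kd) := by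
    intro m hm
    apply hpKhom
    intro h0
    rw [hb, coeff_mapCf Complex.zero_im, h0] at hm
    exact hm Complex.zero_im
  have hβhom : β.IsHomogeneous ((d - Kd) + (d - Kd)) :=
    (hahom.mul hahom).add (hbhom.mul hbhom)
  -- evaluation of β vs pK at real points
  have hβeval : ∀ x : Fin (n' + 1) → ℝ,
      (eval x β = 0 ↔ eval (fun i => (x i : ℂ)) pK = 0) := by
    intro x
    rw [eval_mapCf_decomp pK x, hβ]
    rw [map_add, map_mul, map_mul, ← ha, ← hb]
    constructor
    · intro h0
      have h1 : eval x a = 0 ∧ eval x b = 0 := by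
        constructor
        · refine mul_self_eq_zero.mp ?_
          nlinarith [mul_self_nonneg (eval x a), mul_self_nonneg (eval x b)]
        · refine mul_self_eq_zero.mp ?_
          nlinarith [mul_self_nonneg (eval x a), mul_self_nonneg (eval x b)]
      rw [h1.1, h1.2]
      simp
    · intro h0
      have h1 : (eval x a : ℝ) = 0 ∧ (eval x b : ℝ) = 0 := by
        have hre := congrArg Complex.re h0
        have him := congrArg Complex.im h0
        simp at hre him
        exact ⟨hre, him⟩
      rw [h1.1, h1.2]
      ring
  -- a real point where β does not vanish
  obtain ⟨x, hx⟩ : ∃ x : Fin (n' + 1) → ℝ, eval x β ≠ 0 := by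
    obtain ⟨m, hm⟩ := ne_zero_iff.mp hpK
    have hab : a ≠ 0 ∨ b ≠ 0 := by
      by_contra hcon
      push_neg at hcon
      apply hm
      have h1 := congrArg (coeff m) hcon.1
      have h2 := congrArg (coeff m) hcon.2
      rw [ha, coeff_mapCf Complex.zero_re] at h1
      rw [hb, coeff_mapCf Complex.zero_im] at h2
      simp at h1 h2
      exact Complex.ext h1 h2
    have key : ∀ p : MvPolynomial (Fin (n' + 1)) ℝ, p ≠ 0 →
        ∃ x : Fin (n' + 1) → ℝ, eval x p ≠ 0 := by
      intro p hp
      by_contra hcon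
      push_neg at hcon
      exact hp (MvPolynomial.funext fun y => by rw [hcon y, map_zero])
    rcases hab with hA | hB
    · obtain ⟨x, hxa⟩ := key a hA
      refine ⟨x, ?_⟩
      rw [hβ, map_add, map_mul, map_mul]
      intro hcon
      have h1 := mul_self_pos.mpr hxa
      nlinarith [mul_self_nonneg (eval x b)]
    · obtain ⟨x, hxb⟩ := key b hB
      refine ⟨x, ?_⟩
      rw [hβ, map_add, map_mul, map_mul]
      intro hcon
      have h1 := mul_self_pos.mpr hxb
      nlinarith [mul_self_nonneg (eval x a)]
  -- upgrade to a nonzero point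
  obtain ⟨x, hx, hx0⟩ : ∃ x : Fin (n' + 1) → ℝ, eval x β ≠ 0 ∧ x ≠ 0 := by
    by_cases hx0 : x = 0
    · -- β is a nonzero constant
      subst hx0
      have hc0 : constantCoeff β ≠ 0 := by rwa [← eval_zero]
      have hD : (d - Kd) + (d - Kd) = 0 := by
        by_contra hD
        apply hc0
        rw [constantCoeff_eq]
        apply hβhom.coeff_eq_zero
        rw [map_zero]
        omega
      have htd : β.totalDegree = 0 :=
        Nat.le_zero.mp (le_trans hβhom.totalDegree_le (le_of_eq hD))
      refine ⟨fun _ => 1, ?_, ?_⟩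
      · rw [eval_of_totalDegree_zero htd]
        rwa [eval_zero] at hx
      · intro hcon
        have := congrFun hcon 0
        simp at this
    · exact ⟨x, hx, hx0⟩
  -- the unit vector
  have hmain : ∀ ξ : EuclideanSpace ℝ (Fin (n' + 1)),
      MvPolynomial.eval (fun i => ξ i) β ≠ 0 →
      {t : ℂ | IsTangentHyperplane Q ξ t}.Finite := by
    intro ξ hβξ
    have hpKξ : eval (fun i => ((ξ i : ℝ) : ℂ)) pK ≠ 0 := by
      intro h0
      exact hβξ ((hβeval _).mpr h0)
    set Φξ : Polynomial ℂ := Polynomial.map (eval fun i => ((ξ i : ℝ) : ℂ)) Φ with hΦξdef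
    have hΦξ : Φξ ≠ 0 := by
      intro h0
      apply hpKξ
      have : Φξ.coeff Kd = eval (fun i => ((ξ i : ℝ) : ℂ)) pK := by
        rw [hΦξdef, Polynomial.coeff_map, hpKdef, Polynomial.leadingCoeff, ← hKddef]
      rw [← this, h0, Polynomial.coeff_zero]
    apply Set.Finite.subset (Φξ.finite_setOf_isRoot hΦξ)
    intro t ht
    show Polynomial.IsRoot Φξ t
    have := hvanish ξ t ht
    rwa [eval_eq_eval_mv_eval' (fun i => ((ξ i : ℝ) : ℂ)) t P] at this
  -- construct the unit direction
  let xE : EuclideanSpace ℝ (Fin (n' + 1)) := WithLp.toLp 2 x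
  have hxE : xE ≠ 0 := by
    intro h0
    exact hx0 (_root_.funext fun i => congrFun (congrArg (fun v : EuclideanSpace ℝ (Fin (n' + 1)) =>
      (v : Fin (n' + 1) → ℝ)) h0) i)
  have hnorm : ‖xE‖ ≠ 0 := norm_ne_zero_iff.mpr hxE
  refine ⟨β, ⟨(‖xE‖⁻¹ : ℝ) • xE, ?_, ?_⟩, fun ξ _ hβξ => hmain ξ hβξ⟩
  · rw [norm_smul]
    simp [abs_of_nonneg (inv_nonneg.mpr (norm_nonneg xE)), inv_mul_cancel₀ hnorm]
  · have hfun : (fun i => ((‖xE‖⁻¹ : ℝ) • xE) i) = fun i => ‖xE‖⁻¹ * x i := by ext i; simp [xE]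
    rw [hfun, homog_eval_smul hβhom (‖xE‖⁻¹) x]
    exact mul_ne_zero (pow_ne_zero _ (inv_ne_zero hnorm)) hx
end
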